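/- Suppose (Γ, d) is a metric space that is the union of an increasing sequence of subspaces T_1 ⊆ T_2 ⊆ ⋯, each of which (with the restricted metric) is a metric simplicial tree. Then Γ is an ℝ-tree. -/

import Mathlib

open Set Filter Metric

section Common

variable {H : Type*} [MetricSpace H]

/-- `γ` parametrizes a geodesic from `a` to `b` by arclength on `[0, dist a b]`. -/
def IsGeodesicSegment (γ : ℝ → H) (a b : H) : Prop :=
  γ 0 = a ∧ γ (dist a b) = b ∧
    ∀ s ∈ Set.Icc (0:ℝ) (dist a b), ∀ t ∈ Set.Icc (0:ℝ) (dist a b),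
      dist (γ s) (γ t) = |s - t|

/-- A geodesic space: every pair of points is joined by a geodesic. -/
def GeodesicSpace (H : Type*) [MetricSpace H] : Prop :=
  ∀ a b : H, ∃ γ : ℝ → H, IsGeodesicSegment γ a b

/-- The image of a geodesic segment from `a` to `b`. -/
def segImage (γ : ℝ → H) (a b : H) : Set H :=
  γ '' Set.Icc 0 (dist a b)

/-- A space has `Δ`-thin triangles if each side of every geodesic triangle is contained
in the `Δ`-neighborhood of the union of the other two sides. -/
def ThinTriangles (H : Type*) [MetricSpace H] (Δ : ℝ) : Prop :=
  ∀ a b c : H, ∀ γab γbc γca : ℝ → H,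
    IsGeodesicSegment γab a b → IsGeodesicSegment γbc b c → IsGeodesicSegment γca c a →
      ∀ x ∈ segImage γab a b, ∃ y ∈ segImage γbc b c ∪ segImage γca c a, dist x y ≤ Δ

/-- An arc from `a` to `b`, parametrized (injectively and continuously) by `[0,1]`. -/
def IsArcParam (α : ℝ → H) (a b : H) : Prop :=
  ContinuousOn α (Set.Icc 0 1) ∧ Set.InjOn α (Set.Icc 0 1) ∧ α 0 = a ∧ α 1 = b

/-- An `ℝ`-tree: a metric space in which every pair of points is joined by a geodesic
(so it is a path-metric space and arcs are isometric to intervals of `ℝ`) and in which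
the arc joining two points is unique. -/
def IsRTree (X : Type*) [MetricSpace X] : Prop :=
  (∀ a b : X, ∃ γ : ℝ → X, IsGeodesicSegment γ a b) ∧
  ∀ a b : X, ∀ α β : ℝ → X, IsArcParam α a b → IsArcParam β a b →
    α '' Set.Icc 0 1 = β '' Set.Icc 0 1

/-- The translation length of an isometry. -/
noncomputable def translationLength {X : Type*} [MetricSpace X] (τ : X ≃ᵢ X) : ℝ :=
  ⨅ x : X, dist x (τ x)

/-- The core of an isometry of an `ℝ`-tree: points moved the minimal distance. -/
def isomCore {X : Type*} [MetricSpace X] (τ : X ≃ᵢ X) : Set X :=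
  {x : X | dist x (τ x) = translationLength τ}

/-- An elliptic isometry: one having a fixed point. -/
def IsElliptic {X : Type*} [MetricSpace X] (τ : X ≃ᵢ X) : Prop :=
  ∃ x, τ x = x

/-- A hyperbolic isometry of an `ℝ`-tree: positive translation length, with core
isometric to the real line (its axis). -/
def IsHyperbolicIsom {X : Type*} [MetricSpace X] (τ : X ≃ᵢ X) : Prop :=
  0 < translationLength τ ∧
    ∃ e : ℝ → X, (∀ s t : ℝ, dist (e s) (e t) = |s - t|) ∧ Set.range e = isomCore τ

/-- A metric simplicial tree: an `ℝ`-tree together with a closed discrete set `V` of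
vertices such that each connected component of the complement of `V` is an open edge:
it is the interior of a geodesic segment of positive length with endpoints in `V`. -/
def IsMetricSimplicialTree (X : Type*) [MetricSpace X] : Prop :=
  IsRTree X ∧
    ∃ V : Set X, IsClosed V ∧
      (∀ v ∈ V, ∃ ε > 0, ∀ w ∈ V, dist v w < ε → w = v) ∧
      ∀ x ∈ Vᶜ, ∃ L > (0:ℝ), ∃ f : ℝ → X,
        (∀ s ∈ Set.Icc (0:ℝ) L, ∀ t ∈ Set.Icc (0:ℝ) L, dist (f s) (f t) = |s - t|) ∧
        f '' Set.Ioo 0 L = connectedComponentIn Vᶜ x ∧ f 0 ∈ V ∧ f L ∈ V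

end Common

section AuxTree

variable {X : Type*} [MetricSpace X]

namespace RTreeAux

theorem mem_zero {a b : X} : (0:ℝ) ∈ Set.Icc (0:ℝ) (dist a b) :=
  ⟨le_refl _, dist_nonneg⟩

theorem mem_end {a b : X} : dist a b ∈ Set.Icc (0:ℝ) (dist a b) :=
  ⟨dist_nonneg, le_refl _⟩

theorem dist_left {γ : ℝ → X} {a b : X} (h : IsGeodesicSegment γ a b) {t : ℝ}
    (ht : t ∈ Set.Icc (0:ℝ) (dist a b)) : dist a (γ t) = t := by
  have h0 := h.2.2 0 mem_zero t ht
  rw [h.1] at h0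
  rw [h0, zero_sub, abs_neg, abs_of_nonneg ht.1]

theorem dist_right {γ : ℝ → X} {a b : X} (h : IsGeodesicSegment γ a b) {t : ℝ}
    (ht : t ∈ Set.Icc (0:ℝ) (dist a b)) : dist (γ t) b = dist a b - t := by
  have h0 := h.2.2 t ht (dist a b) mem_end
  rw [h.2.1] at h0
  rw [h0, abs_of_nonpos (by linarith [ht.2])]
  ring

theorem gseg_continuousOn {γ : ℝ → X} {a b : X} (h : IsGeodesicSegment γ a b) :
    ContinuousOn γ (Set.Icc (0:ℝ) (dist a b)) := by
  have : LipschitzOnWith 1 γ (Set.Icc (0:ℝ) (dist a b)) := by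
    apply LipschitzOnWith.of_dist_le_mul
    intro s hs t ht
    rw [h.2.2 s hs t ht, Real.dist_eq]
    simp
  exact this.continuousOn

theorem gseg_injOn {γ : ℝ → X} {a b : X} (h : IsGeodesicSegment γ a b) :
    Set.InjOn γ (Set.Icc (0:ℝ) (dist a b)) := by
  intro s hs t ht hst
  have := h.2.2 s hs t ht
  rw [hst, dist_self] at this
  have := abs_eq_zero.mp this.symm
  linarith [this]

/-- An auxiliary way to produce an arc parametrized on `[0,1]` from a map on `[0,L]`. -/
theorem arc_of_scaled {f : ℝ → X} {L : ℝ} {y z : X} (hL : 0 < L)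
    (hlip : ∀ u ∈ Set.Icc (0:ℝ) L, ∀ u' ∈ Set.Icc (0:ℝ) L, dist (f u) (f u') ≤ |u - u'|)
    (hinj : Set.InjOn f (Set.Icc (0:ℝ) L)) (h0 : f 0 = y) (h1 : f L = z) :
    IsArcParam (fun v => f (L * v)) y z := by
  have hmem : ∀ v ∈ Set.Icc (0:ℝ) 1, L * v ∈ Set.Icc (0:ℝ) L := by
    intro v hv
    constructor
    · exact mul_nonneg hL.le hv.1
    · nlinarith [hv.1, hv.2]
  refine ⟨?_, ?_, ?_, ?_⟩
  · have : LipschitzOnWith L.toNNReal (fun v => f (L * v)) (Set.Icc (0:ℝ) 1) := by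
      apply LipschitzOnWith.of_dist_le_mul
      intro v hv v' hv'
      have := hlip _ (hmem v hv) _ (hmem v' hv')
      have habs : |L * v - L * v'| = L * |v - v'| := by
        rw [← mul_sub, abs_mul, abs_of_nonneg hL.le]
      rw [Real.dist_eq, Real.coe_toNNReal _ hL.le]
      calc dist (f (L * v)) (f (L * v')) ≤ |L * v - L * v'| := this
        _ = L * |v - v'| := habs
    exact this.continuousOn
  · intro v hv v' hv' hEq
    have := hinj (hmem v hv) (hmem v' hv') hEq
    exact mul_left_cancel₀ (ne_of_gt hL) this
  · simpa using h0
  · simpa using h1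

end RTreeAux

open RTreeAux

/-- Center lemma: for any geodesic `γ : x → y` and any `z`, there is a point `c = γ t`
with `c` between `x` and `z`, and between `y` and `z`. -/
theorem exists_center (hX : IsRTree X) {γ : ℝ → X} {x y : X}
    (hγ : IsGeodesicSegment γ x y) (z : X) :
    ∃ t ∈ Set.Icc (0:ℝ) (dist x y),
      dist x (γ t) + dist (γ t) z = dist x z ∧
      dist y (γ t) + dist (γ t) z = dist y z := by
  obtain ⟨β, hβ⟩ := hX.1 x z
  set d1 := dist x y with hd1
  set d2 := dist x z with hd2
  set S : Set ℝ := {t | t ∈ Set.Icc (0:ℝ) d1 ∧ γ t ∈ β '' Set.Icc (0:ℝ) d2} with hS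
  have hS0 : (0:ℝ) ∈ S := by
    refine ⟨⟨le_refl _, dist_nonneg⟩, ⟨0, ⟨le_refl _, dist_nonneg⟩, ?_⟩⟩
    rw [hβ.1, hγ.1]
  have hSbdd : BddAbove S := ⟨d1, fun t ht => ht.1.2⟩
  have hSclosed : IsClosed S := by
    have h2 : IsClosed (β '' Set.Icc (0:ℝ) d2) :=
      (isCompact_Icc.image_of_continuousOn (gseg_continuousOn hβ)).isClosed
    exact (gseg_continuousOn hγ).preimage_isClosed_of_isClosed isClosed_Icc h2
  set t0 := sSup S with ht0def
  have ht0S : t0 ∈ S := hSclosed.csSup_mem ⟨0, hS0⟩ hSbdd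
  have ht0Icc : t0 ∈ Set.Icc (0:ℝ) d1 := ht0S.1
  obtain ⟨u, huIcc, huEq⟩ := ht0S.2
  have hut0 : u = t0 := by
    have e1 : dist x (γ t0) = t0 := dist_left hγ ht0Icc
    have e2 : dist x (β u) = u := dist_left hβ huIcc
    rw [huEq] at e2; rw [e1] at e2; exact e2.symm
  have hc : γ t0 = β t0 := by rw [← huEq, hut0]
  have ht0Icc2 : t0 ∈ Set.Icc (0:ℝ) d2 := hut0 ▸ huIcc
  have hmax : ∀ t ∈ Set.Icc (0:ℝ) d1, γ t ∈ β '' Set.Icc (0:ℝ) d2 → t ≤ t0 :=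
    fun t h1 h2 => le_csSup hSbdd ⟨h1, h2⟩
  -- first betweenness relation always holds
  have hBxz : dist x (γ t0) + dist (γ t0) z = d2 := by
    rw [hc, dist_left hβ ht0Icc2, dist_right hβ ht0Icc2]; ring
  refine ⟨t0, ht0Icc, hBxz, ?_⟩
  by_cases h1 : t0 = d1
  · have hcy : γ t0 = y := by rw [h1, hγ.2.1]
    rw [hcy, dist_self, zero_add]
  by_cases h2 : t0 = d2
  · have hcz : γ t0 = z := by rw [hc, h2, hβ.2.1]
    rw [hcz, dist_self, add_zero]
  -- main case
  have hL1 : 0 < d1 - t0 := sub_pos.mpr (lt_of_le_of_ne ht0Icc.2 h1)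
  have hL2 : 0 < d2 - t0 := sub_pos.mpr (lt_of_le_of_ne ht0Icc2.2 h2)
  set L1 := d1 - t0 with hL1def
  set L2 := d2 - t0 with hL2def
  set Lt := L1 + L2 with hLtdef
  have hLt : 0 < Lt := by positivity
  set η : ℝ → X := fun u => if u ≤ L1 then γ (d1 - u) else β (t0 + (u - L1)) with hηdef
  have hmem1 : ∀ u : ℝ, 0 ≤ u → u ≤ L1 → d1 - u ∈ Set.Icc (0:ℝ) d1 := by
    intro u h0 h1'
    constructor <;> [skip; linarith]
    have := ht0Icc.1; linarith
  have hmem2 : ∀ u : ℝ, L1 ≤ u → u ≤ Lt → t0 + (u - L1) ∈ Set.Icc (0:ℝ) d2 := by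
    intro u h0 h1'
    constructor
    · have := ht0Icc.1; linarith
    · linarith
  have hη0 : η 0 = y := by
    have : (0:ℝ) ≤ L1 := hL1.le
    simp only [hηdef, if_pos this, sub_zero, hγ.2.1]
    exact hγ.2.1
  have hηL : η Lt = z := by
    have hnle : ¬ (Lt ≤ L1) := by simp only [hLtdef]; linarith
    simp only [hηdef, if_neg hnle]
    have : t0 + (Lt - L1) = d2 := by simp only [hLtdef, hL2def]; ring
    rw [this, hβ.2.1]
  -- distance bound on η
  have hdistη : ∀ u ∈ Set.Icc (0:ℝ) Lt, ∀ u' ∈ Set.Icc (0:ℝ) Lt,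
      dist (η u) (η u') ≤ |u - u'| := by
    have key : ∀ u ∈ Set.Icc (0:ℝ) Lt, ∀ u' ∈ Set.Icc (0:ℝ) Lt, u ≤ u' →
        dist (η u) (η u') ≤ |u - u'| := by
      intro u hu u' hu' hle
      by_cases c1 : u ≤ L1 <;> by_cases c2 : u' ≤ L1
      · simp only [hηdef, if_pos c1, if_pos c2]
        rw [hγ.2.2 _ (hmem1 u hu.1 c1) _ (hmem1 u' hu'.1 c2)]
        rw [abs_sub_comm]
        apply le_of_eq
        congr 1; ring
      · -- u ≤ L1 < u'
        simp only [hηdef, if_pos c1, if_neg c2]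
        push_neg at c2
        have hmm1 := hmem1 u hu.1 c1
        have hmm2 := hmem2 u' c2.le hu'.2
        calc dist (γ (d1 - u)) (β (t0 + (u' - L1)))
            ≤ dist (γ (d1 - u)) (γ t0) + dist (γ t0) (β (t0 + (u' - L1))) :=
              dist_triangle _ _ _
          _ = |d1 - u - t0| + |t0 - (t0 + (u' - L1))| := by
              rw [hγ.2.2 _ hmm1 _ ht0Icc, hc, hβ.2.2 _ ht0Icc2 _ hmm2]
          _ = (L1 - u) + (u' - L1) := by
              rw [abs_of_nonneg (by simp only [hL1def] at c1 ⊢; linarith),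
                abs_of_nonpos (by linarith)]
              simp only [hL1def]; ring
          _ ≤ |u - u'| := by rw [abs_sub_comm, abs_of_nonneg (by linarith)]; linarith
      · exact absurd (le_trans hle c2) c1
      · simp only [hηdef, if_neg c1, if_neg c2]
        push_neg at c1 c2
        rw [hβ.2.2 _ (hmem2 u c1.le hu.2) _ (hmem2 u' c2.le hu'.2)]
        apply le_of_eq
        congr 1; ring
    intro u hu u' hu'
    rcases le_total u u' with h | h
    · exact key u hu u' hu' h
    · rw [dist_comm, abs_sub_comm]; exact key u' hu' u hu h
  -- injectivity of η
  have hinjη : Set.InjOn η (Set.Icc (0:ℝ) Lt) := by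
    intro u hu u' hu' hEq
    by_cases c1 : u ≤ L1 <;> by_cases c2 : u' ≤ L1
    · simp only [hηdef, if_pos c1, if_pos c2] at hEq
      have := gseg_injOn hγ (hmem1 u hu.1 c1) (hmem1 u' hu'.1 c2) hEq
      linarith
    · exfalso
      push_neg at c2
      simp only [hηdef, if_pos c1, if_neg (not_le.mpr c2)] at hEq
      have hmm1 := hmem1 u hu.1 c1
      have hmm2 := hmem2 u' c2.le hu'.2
      have hle : d1 - u ≤ t0 := hmax _ hmm1 ⟨_, hmm2, hEq.symm⟩
      have huL1 : u = L1 := by simp only [hL1def] at c1 ⊢; linarith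
      rw [huL1] at hEq
      have : d1 - L1 = t0 := by simp only [hL1def]; ring
      rw [this, hc] at hEq
      have := gseg_injOn hβ ht0Icc2 hmm2 hEq
      linarith
    · exfalso
      push_neg at c1
      simp only [hηdef, if_neg (not_le.mpr c1), if_pos c2] at hEq
      have hmm1 := hmem1 u' hu'.1 c2
      have hmm2 := hmem2 u c1.le hu.2
      have hle : d1 - u' ≤ t0 := hmax _ hmm1 ⟨_, hmm2, hEq⟩
      have huL1 : u' = L1 := by simp only [hL1def] at c2 ⊢; linarith
      rw [huL1] at hEq
      have : d1 - L1 = t0 := by simp only [hL1def]; ring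
      rw [this, hc] at hEq
      have := gseg_injOn hβ hmm2 ht0Icc2 hEq
      linarith
    · push_neg at c1 c2
      simp only [hηdef, if_neg (not_le.mpr c1), if_neg (not_le.mpr c2)] at hEq
      have := gseg_injOn hβ (hmem2 u c1.le hu.2) (hmem2 u' c2.le hu'.2) hEq
      linarith
  -- y ≠ z
  have hyz : y ≠ z := by
    intro hEq
    have h0 : η 0 = η Lt := by rw [hη0, hηL, hEq]
    have := hinjη ⟨le_refl _, hLt.le⟩ ⟨hLt.le, le_refl _⟩ h0
    linarith
  have hdyz : 0 < dist y z := dist_pos.mpr hyz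
  obtain ⟨δ, hδ⟩ := hX.1 y z
  -- two arcs from y to z
  have hA : IsArcParam (fun v => η (Lt * v)) y z :=
    arc_of_scaled hLt hdistη hinjη hη0 hηL
  have hD : IsArcParam (fun v => δ (dist y z * v)) y z := by
    apply arc_of_scaled hdyz _ (gseg_injOn hδ) hδ.1 hδ.2.1
    intro u hu u' hu'
    exact le_of_eq (hδ.2.2 u hu u' hu')
  have himg := hX.2 y z _ _ hA hD
  -- γ t0 lies on the first arc
  have hcA : γ t0 ∈ (fun v => η (Lt * v)) '' Set.Icc (0:ℝ) 1 := by
    refine ⟨L1 / Lt, ⟨by positivity, ?_⟩, ?_⟩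
    · rw [div_le_one hLt]; linarith
    · show η (Lt * (L1 / Lt)) = γ t0
      have h1 : Lt * (L1 / Lt) = L1 := by field_simp
      rw [h1]
      have : η L1 = γ (d1 - L1) := by simp only [hηdef, if_pos (le_refl L1)]
      rw [this]
      congr 1
      simp only [hL1def]; ring
  rw [himg] at hcA
  obtain ⟨v, hv, hvEq⟩ := hcA
  have hrIcc : dist y z * v ∈ Set.Icc (0:ℝ) (dist y z) := by
    constructor
    · exact mul_nonneg hdyz.le hv.1
    · nlinarith [hv.1, hv.2]
  have e1 : dist y (γ t0) = dist y z * v := by rw [← hvEq]; exact dist_left hδ hrIcc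
  have e2 : dist (γ t0) z = dist y z - dist y z * v := by rw [← hvEq]; exact dist_right hδ hrIcc
  rw [e1, e2]; ring
/-- The four-point condition holds in any `ℝ`-tree. -/
theorem fourPt_of_rtree (hX : IsRTree X) (p q r s : X) :
    dist p q + dist r s ≤ max (dist p r + dist q s) (dist p s + dist q r) := by
  obtain ⟨γ, hγ⟩ := hX.1 p q
  obtain ⟨t1, ht1, hB1x, hB1y⟩ := exists_center hX hγ r
  obtain ⟨t2, ht2, hB2x, hB2y⟩ := exists_center hX hγ s
  have e1 : dist p (γ t1) = t1 := RTreeAux.dist_left hγ ht1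
  have e2 : dist p (γ t2) = t2 := RTreeAux.dist_left hγ ht2
  have f1 : dist (γ t1) q = dist p q - t1 := RTreeAux.dist_right hγ ht1
  have f2 : dist (γ t2) q = dist p q - t2 := RTreeAux.dist_right hγ ht2
  have htri : dist r s ≤ dist r (γ t1) + dist (γ t1) (γ t2) + dist (γ t2) s :=
    dist_triangle4 _ _ _ _
  have hc12 : dist (γ t1) (γ t2) = |t1 - t2| := hγ.2.2 _ ht1 _ ht2
  have hr1 : dist r (γ t1) = dist (γ t1) r := dist_comm _ _
  have hq1 : dist q (γ t1) = dist (γ t1) q := dist_comm _ _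
  have hq2 : dist q (γ t2) = dist (γ t2) q := dist_comm _ _
  rcases le_total t1 t2 with h | h
  · have habs : |t1 - t2| = t2 - t1 := by rw [abs_sub_comm, abs_of_nonneg (by linarith)]
    -- dist r (γ t1) = dist q r - dist q (γ t1) = dist q r - (dist p q - t1)
    -- dist (γ t2) s = dist p s - t2
    have h1 : dist (γ t1) r = dist q r - (dist p q - t1) := by
      rw [← hq1] at f1
      linarith [hB1y, f1]
    have h2 : dist (γ t2) s = dist p s - t2 := by linarith [hB2x, e2]
    have : dist p q + dist r s ≤ dist p s + dist q r := by
      rw [hc12, habs] at htri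
      rw [hr1] at htri
      linarith
    exact le_trans this (le_max_right _ _)
  · have habs : |t1 - t2| = t1 - t2 := abs_of_nonneg (by linarith)
    have h1 : dist (γ t1) r = dist p r - t1 := by linarith [hB1x, e1]
    have h2 : dist (γ t2) s = dist q s - (dist p q - t2) := by
      rw [← hq2] at f2
      linarith [hB2y, f2]
    have : dist p q + dist r s ≤ dist p r + dist q s := by
      rw [hc12, habs] at htri
      rw [hr1] at htri
      linarith
    exact le_trans this (le_max_left _ _)

/-- Propagation lemma: the four-point condition lets betweenness propagate to nearby points. -/
theorem between_propagate
    (h4 : ∀ p q r s : X, dist p q + dist r s ≤ max (dist p r + dist q s) (dist p s + dist q r))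
    {x y p b : X} (hx : dist x p + dist p b = dist x b) (hxy : dist x y < dist x p) :
    dist y p + dist p b = dist y b := by
  have := h4 x b y p
  rcases le_max_iff.mp this with h | h
  · exfalso
    have hpb : dist b p = dist p b := dist_comm _ _
    rw [hpb] at h
    have : dist x p + dist y p ≤ dist x y := by linarith
    linarith [dist_nonneg (x := y) (y := p)]
  · have hby : dist b y = dist y b := dist_comm _ _
    have hyp : dist y p = dist p y := dist_comm _ _
    rw [hby] at h
    have h1 : dist p b + dist y p ≤ dist y b := by linarith
    have h2 : dist y b ≤ dist y p + dist p b := dist_triangle _ _ _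
    linarith

/-- Separation lemma: in a space with the four-point condition, every connected set
containing the endpoints of a geodesic contains each interior point of the geodesic. -/
theorem mem_of_connected
    (h4 : ∀ p q r s : X, dist p q + dist r s ≤ max (dist p r + dist q s) (dist p s + dist q r))
    {γ : ℝ → X} {a b : X} (hγ : IsGeodesicSegment γ a b) {s : ℝ}
    (hs : s ∈ Set.Ioo (0:ℝ) (dist a b)) {K : Set X} (hK : IsPreconnected K)
    (haK : a ∈ K) (hbK : b ∈ K) : γ s ∈ K := by
  by_contra hpK
  set p := γ s with hpdef
  have hsIcc : s ∈ Set.Icc (0:ℝ) (dist a b) := ⟨hs.1.le, hs.2.le⟩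
  have hap : dist a p = s := RTreeAux.dist_left hγ hsIcc
  have hpb : dist p b = dist a b - s := RTreeAux.dist_right hγ hsIcc
  set F : Set X := {x | dist x p + dist p b = dist x b} with hFdef
  have hFclosed : IsClosed F := by
    apply isClosed_eq
    · exact ((continuous_id.dist continuous_const).add continuous_const)
    · exact continuous_id.dist continuous_const
  set U : Set X := ⋃ x ∈ K ∩ F, Metric.ball x (dist x p) with hUdef
  have hUopen : IsOpen U := isOpen_biUnion fun x _ => Metric.isOpen_ball
  have hUF : U ⊆ F := by
    intro y hy
    simp only [hUdef, Set.mem_iUnion] at hy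
    obtain ⟨x, ⟨_, hxF⟩, hyball⟩ := hy
    have : dist x y < dist x p := by
      rw [dist_comm]; exact Metric.mem_ball.mp hyball
    exact between_propagate h4 hxF this
  have haF : a ∈ F := by
    simp only [hFdef, Set.mem_setOf_eq, hap, hpb]
    exact by linarith [hs.1, hs.2]
  have hbF : b ∉ F := by
    simp only [hFdef, Set.mem_setOf_eq, dist_self]
    intro hcon
    have hd : dist b p = dist p b := dist_comm _ _
    rw [hd] at hcon
    have : dist p b = 0 := by linarith
    rw [hpb] at this
    linarith [hs.2]
  have haU : a ∈ U := by
    simp only [hUdef, Set.mem_iUnion]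
    refine ⟨a, ⟨haK, haF⟩, ?_⟩
    rw [Metric.mem_ball, dist_self, hap]
    exact hs.1
  have hcover : K ⊆ U ∪ Fᶜ := by
    intro x hxK
    by_cases hxF : x ∈ F
    · left
      simp only [hUdef, Set.mem_iUnion]
      refine ⟨x, ⟨hxK, hxF⟩, ?_⟩
      rw [Metric.mem_ball, dist_self]
      rw [dist_pos]
      intro hxp
      exact hpK (hxp ▸ hxK)
    · right; exact hxF
  have hdisj : K ∩ (U ∩ Fᶜ) = ∅ := by
    ext x
    simp only [Set.mem_inter_iff, Set.mem_compl_iff, Set.mem_empty_iff_false, iff_false]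
    rintro ⟨_, hxU, hxF⟩
    exact hxF (hUF hxU)
  have := hK U Fᶜ hUopen hFclosed.isOpen_compl hcover ⟨a, haK, haU⟩ ⟨b, hbK, hbF⟩
  rw [hdisj] at this
  exact Set.not_nonempty_empty this

end AuxTree

/-- A metric space which is the union of an increasing sequence of
subspaces, each of which is a metric simplicial tree, is an `ℝ`-tree. -/
theorem rtree_of_increasing_union_of_simplicial_trees
    {Γ : Type*} [MetricSpace Γ] (T : ℕ → Set Γ)
    (hmono : Monotone T) (hunion : (⋃ n, T n) = Set.univ)
    (htree : ∀ n, IsMetricSimplicialTree ↥(T n)) :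
    IsRTree Γ := by
  have hmem : ∀ a : Γ, ∃ n, a ∈ T n := by
    intro a
    have : a ∈ ⋃ n, T n := hunion ▸ Set.mem_univ a
    exact Set.mem_iUnion.mp this
  have hmem4 : ∀ a b c d : Γ, ∃ n, a ∈ T n ∧ b ∈ T n ∧ c ∈ T n ∧ d ∈ T n := by
    intro a b c d
    obtain ⟨na, ha⟩ := hmem a
    obtain ⟨nb, hb⟩ := hmem b
    obtain ⟨nc, hc⟩ := hmem c
    obtain ⟨nd, hd⟩ := hmem d
    refine ⟨max (max na nb) (max nc nd), ?_, ?_, ?_, ?_⟩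
    · exact hmono (le_trans (le_max_left _ _) (le_max_left _ _)) ha
    · exact hmono (le_trans (le_max_right _ _) (le_max_left _ _)) hb
    · exact hmono (le_trans (le_max_left _ _) (le_max_right _ _)) hc
    · exact hmono (le_trans (le_max_right _ _) (le_max_right _ _)) hd
  have h4 : ∀ p q r s : Γ, dist p q + dist r s ≤
      max (dist p r + dist q s) (dist p s + dist q r) := by
    intro p q r s
    obtain ⟨n, hp, hq, hr, hs⟩ := hmem4 p q r s
    have := fourPt_of_rtree (htree n).1 ⟨p, hp⟩ ⟨q, hq⟩ ⟨r, hr⟩ ⟨s, hs⟩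
    simpa [Subtype.dist_eq] using this
  have hgeo : ∀ a b : Γ, ∃ γ : ℝ → Γ, IsGeodesicSegment γ a b := by
    intro a b
    obtain ⟨n, ha, hb, -, -⟩ := hmem4 a b a a
    obtain ⟨γ, hγ⟩ := (htree n).1.1 ⟨a, ha⟩ ⟨b, hb⟩
    have hd : dist a b = dist (⟨a, ha⟩ : ↥(T n)) ⟨b, hb⟩ := by
      rw [Subtype.dist_eq]
    refine ⟨fun t => ↑(γ t), ?_, ?_, ?_⟩
    · show ((γ 0 : ↥(T n)) : Γ) = a
      rw [hγ.1]
    · rw [hd]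
      show ((γ (dist (⟨a, ha⟩ : ↥(T n)) ⟨b, hb⟩) : ↥(T n)) : Γ) = b
      rw [hγ.2.1]
    · intro s hs t ht
      rw [hd] at hs ht
      have := hγ.2.2 s hs t ht
      rwa [Subtype.dist_eq] at this
  have heq4 : ∀ x p a b : Γ, dist a x = dist a p → dist x b = dist p b →
      dist a x + dist x b = dist a b → x = p := by
    intro x p a b h1 h2 h3
    have hm := h4 x p a b
    have hxa : dist x a = dist a x := dist_comm _ _
    have hpa : dist p a = dist a p := dist_comm _ _
    have hle : dist x p ≤ 0 := by
      rcases le_max_iff.mp hm with h | h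
      · rw [hxa, h1] at h; linarith
      · rw [hpa] at h; linarith
    exact dist_le_zero.mp hle
  constructor
  · exact hgeo
  · intro a b α βf hα hβ
    by_cases hab : a = b
    · exfalso
      subst hab
      have h01 : α 0 = α 1 := by rw [hα.2.2.1, hα.2.2.2]
      have := hα.2.1 ⟨le_refl (0:ℝ), zero_le_one⟩ ⟨zero_le_one, le_refl (1:ℝ)⟩ h01
      exact zero_ne_one this
    obtain ⟨γ, hγ⟩ := hgeo a b
    have hd : 0 < dist a b := dist_pos.mpr hab
    have key : ∀ f : ℝ → Γ, IsArcParam f a b →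
        f '' Set.Icc 0 1 = γ '' Set.Icc 0 (dist a b) := by
      intro f hf
      apply Set.Subset.antisymm
      · rintro _ ⟨t, ht, rfl⟩
        by_cases hE : dist a (f t) + dist (f t) b = dist a b
        · have hax : dist a (f t) ∈ Set.Icc (0:ℝ) (dist a b) :=
            ⟨dist_nonneg, by linarith [dist_nonneg (x := f t) (y := b)]⟩
          have h1 : dist a (f t) = dist a (γ (dist a (f t))) :=
            (RTreeAux.dist_left hγ hax).symm
          have h2 : dist (f t) b = dist (γ (dist a (f t))) b := by
            rw [RTreeAux.dist_right hγ hax]; linarith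
          have hx := heq4 (f t) (γ (dist a (f t))) a b h1 h2 hE
          exact ⟨dist a (f t), hax, hx.symm⟩
        · exfalso
          have hEpos : 0 < dist a (f t) + dist (f t) b - dist a b :=
            lt_of_le_of_ne (by linarith [dist_triangle a (f t) b]) (by
              intro hcon; exact hE (by linarith))
          set x := f t with hxdef
          set e := (dist a x + dist x b - dist a b) / 2 with hedef
          have he : 0 < e := by positivity
          have hea : e ≤ dist a x := by
            have := dist_triangle x a b
            rw [dist_comm x a] at this
            simp only [hedef]; linarith
          have heb : e ≤ dist x b := by
            have := dist_triangle a b x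
            rw [dist_comm b x] at this
            simp only [hedef]; linarith
          obtain ⟨γ₁, hγ₁⟩ := hgeo a x
          obtain ⟨γ₂, hγ₂⟩ := hgeo x b
          have hs1 : dist a x - e / 2 ∈ Set.Icc (0:ℝ) (dist a x) := ⟨by linarith, by linarith⟩
          have hs2 : e / 2 ∈ Set.Icc (0:ℝ) (dist x b) := ⟨by linarith, by linarith⟩
          set m := γ₁ (dist a x - e / 2) with hmdef
          have dam : dist a m = dist a x - e / 2 := RTreeAux.dist_left hγ₁ hs1
          have dmx : dist m x = e / 2 := by
            have := RTreeAux.dist_right hγ₁ hs1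
            rw [← hmdef] at this
            linarith
          have dmb : dist m b = dist x b - e / 2 := by
            have hup := h4 m b x a
            have hxa' : dist x a = dist a x := dist_comm _ _
            have hba' : dist b a = dist a b := dist_comm _ _
            have hma' : dist m a = dist a m := dist_comm _ _
            have hbx' : dist b x = dist x b := dist_comm _ _
            have hmax' : max (dist m x + dist b a) (dist m a + dist b x)
                ≤ dist a x - e / 2 + dist x b := by
              apply max_le
              · rw [dmx, hba']; simp only [hedef] at *; linarith
              · rw [hma', dam, hbx']
            have hup2 : dist m b ≤ dist x b - e / 2 := by
              rw [hxa'] at hup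
              have := le_trans hup hmax'
              linarith
            have hlow : dist x b ≤ dist x m + dist m b := dist_triangle _ _ _
            rw [dist_comm x m, dmx] at hlow
            linarith
          have hm2 : m = γ₂ (e / 2) := by
            apply heq4 m (γ₂ (e / 2)) x b
            · rw [dist_comm x m, dmx, RTreeAux.dist_left hγ₂ hs2]
            · rw [dmb, RTreeAux.dist_right hγ₂ hs2]
            · rw [dist_comm x m, dmx, dmb]; ring
          -- m lies on both halves of the arc
          have hK1 : IsPreconnected (f '' Set.Icc 0 t) :=
            isPreconnected_Icc.image f (hf.1.mono (Set.Icc_subset_Icc (le_refl _) ht.2))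
          have hK2 : IsPreconnected (f '' Set.Icc t 1) :=
            isPreconnected_Icc.image f (hf.1.mono (Set.Icc_subset_Icc ht.1 (le_refl _)))
          have hmK1 : m ∈ f '' Set.Icc 0 t := by
            rw [hmdef]
            apply mem_of_connected h4 hγ₁ ⟨by linarith, by linarith⟩ hK1
            · exact ⟨0, ⟨le_refl _, ht.1⟩, hf.2.2.1⟩
            · exact ⟨t, ⟨ht.1, le_refl _⟩, rfl⟩
          have hmK2 : m ∈ f '' Set.Icc t 1 := by
            rw [hm2]
            apply mem_of_connected h4 hγ₂ ⟨by linarith, by linarith⟩ hK2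
            · exact ⟨t, ⟨le_refl _, ht.2⟩, rfl⟩
            · exact ⟨1, ⟨ht.2, le_refl _⟩, hf.2.2.2⟩
          obtain ⟨t1, ht1, hft1⟩ := hmK1
          obtain ⟨t2, ht2, hft2⟩ := hmK2
          have ht1' : t1 ∈ Set.Icc (0:ℝ) 1 := ⟨ht1.1, le_trans ht1.2 ht.2⟩
          have ht2' : t2 ∈ Set.Icc (0:ℝ) 1 := ⟨le_trans ht.1 ht2.1, ht2.2⟩
          have ht12 : t1 = t2 := hf.2.1 ht1' ht2' (by rw [hft1, hft2])
          have htt : t1 = t := le_antisymm ht1.2 (ht12 ▸ ht2.1)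
          have hmx : m = x := by rw [← hft1, htt]
          rw [hmx] at dmx
          rw [dist_self] at dmx
          linarith
      · rintro _ ⟨s, hsIcc, rfl⟩
        rcases eq_or_lt_of_le hsIcc.1 with h0 | h0
        · have hgs : γ s = a := by rw [← h0, hγ.1]
          rw [hgs]
          exact ⟨0, ⟨le_refl _, zero_le_one⟩, hf.2.2.1⟩
        rcases eq_or_lt_of_le hsIcc.2 with h1 | h1
        · have hgs : γ s = b := by rw [h1, hγ.2.1]
          rw [hgs]
          exact ⟨1, ⟨zero_le_one, le_refl _⟩, hf.2.2.2⟩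
        apply mem_of_connected h4 hγ ⟨h0, h1⟩ (isPreconnected_Icc.image f hf.1)
        · exact ⟨0, ⟨le_refl _, zero_le_one⟩, hf.2.2.1⟩
        · exact ⟨1, ⟨zero_le_one, le_refl _⟩, hf.2.2.2⟩
    rw [key α hα, key βf hβ]
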